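/- Let A₁ = ℚ[k₁, k₂, γ₂, η]/(η² − (2k₂ + k₁²)(4γ₂ − k₁²)), let B = ℚ[k₁, k₂, η]/(η² + (2k₂ + k₁²)k₁²), and let C = ℚ[k₁, k₂]. Let p : A₁ → B be the ring homomorphism induced by k₁ ↦ k₁, k₂ ↦ k₂, η ↦ η, γ₂ ↦ 0, and let q : C → B be the homomorphism induced by the inclusion ℚ[k₁, k₂] ⊆ ℚ[k₁, k₂, η]. Then the ℚ-algebra homomorphism from ℚ[K₁, K₂, G, Q] to the fiber product A₁ ×_B C (taken along p and q) determined by K₁ ↦ (k₁, k₁), K₂ ↦ (k₂, k₂), G ↦ (γ₂, 0), Q ↦ (γ₂·η, 0) (classes denoting images in the respective quotients) is surjective with kernel the principal ideal generated by Q² + G²(2K₂ + K₁²)(K₁² − 4G); hence A₁ ×_B C ≅ ℚ[K₁, K₂, G, Q]/(Q² + G²(2K₂ + K₁²)(K₁² − 4G)). -/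

import Mathlib

open MvPolynomial

namespace Stmt7

/-- The relation of `A₁ = ℚ[k₁, k₂, γ₂, η]/(η² − (2k₂ + k₁²)(4γ₂ − k₁²))`,
with `k₁ = X 0`, `k₂ = X 1`, `γ₂ = X 2`, `η = X 3`. -/
noncomputable def relA : MvPolynomial (Fin 4) ℚ :=
  X 3 ^ 2 - (2 * X 1 + X 0 ^ 2) * (4 * X 2 - X 0 ^ 2)

/-- The relation of `B = ℚ[k₁, k₂, η]/(η² + (2k₂ + k₁²)k₁²)`,
with `k₁ = X 0`, `k₂ = X 1`, `η = X 2`. -/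
noncomputable def relB : MvPolynomial (Fin 3) ℚ :=
  X 2 ^ 2 + (2 * X 1 + X 0 ^ 2) * X 0 ^ 2

/-- `A₁ = ℚ[k₁, k₂, γ₂, η]/(η² − (2k₂ + k₁²)(4γ₂ − k₁²))`. -/
abbrev A1 : Type := MvPolynomial (Fin 4) ℚ ⧸ Ideal.span {relA}

/-- `B = ℚ[k₁, k₂, η]/(η² + (2k₂ + k₁²)k₁²)`. -/
abbrev B : Type := MvPolynomial (Fin 3) ℚ ⧸ Ideal.span {relB}

/-- `C = ℚ[k₁, k₂]`. -/
abbrev C : Type := MvPolynomial (Fin 2) ℚ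

noncomputable def mkA : MvPolynomial (Fin 4) ℚ →ₐ[ℚ] A1 :=
  Ideal.Quotient.mkₐ ℚ (Ideal.span {relA})

noncomputable def mkB : MvPolynomial (Fin 3) ℚ →ₐ[ℚ] B :=
  Ideal.Quotient.mkₐ ℚ (Ideal.span {relB})

lemma aux_p : ∀ x ∈ Ideal.span {relA},
    (mkB.comp (aeval ![X 0, X 1, 0, X 2])) x = 0 := by
  intro x hx
  obtain ⟨c, rfl⟩ := Ideal.mem_span_singleton'.mp hx
  rw [map_mul]
  have h1 : (aeval ![X 0, X 1, 0, X 2] :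
      MvPolynomial (Fin 4) ℚ →ₐ[ℚ] MvPolynomial (Fin 3) ℚ) relA = relB := by
    simp only [relA, relB, map_sub, map_add, map_mul, map_pow, map_ofNat, aeval_X]
    simp only [Matrix.cons_val_zero, Matrix.cons_val_one, Matrix.cons_val_two,
      Matrix.cons_val_three, Matrix.head_cons, Matrix.tail_cons]
    ring
  have h2 : (mkB.comp (aeval ![X 0, X 1, 0, X 2])) relA = 0 := by
    rw [AlgHom.comp_apply, h1, mkB, Ideal.Quotient.mkₐ_eq_mk,
      Ideal.Quotient.eq_zero_iff_mem]
    exact Ideal.subset_span rfl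
  rw [h2, mul_zero]

/-- `p : A₁ → B`, induced by `k₁ ↦ k₁`, `k₂ ↦ k₂`, `η ↦ η`, `γ₂ ↦ 0`. -/
noncomputable def p : A1 →ₐ[ℚ] B :=
  Ideal.Quotient.liftₐ (Ideal.span {relA}) (mkB.comp (aeval ![X 0, X 1, 0, X 2])) aux_p

/-- `q : C → B`, induced by the inclusion `ℚ[k₁, k₂] ⊆ ℚ[k₁, k₂, η]`. -/
noncomputable def q : C →ₐ[ℚ] B :=
  mkB.comp (aeval ![X 0, X 1])

/-- The fiber product `A₁ ×_B C` along `p` and `q`, as a subring of `A₁ × C`. -/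
noncomputable def F : Subring (A1 × C) :=
  (p.toRingHom.comp (RingHom.fst A1 C)).eqLocus (q.toRingHom.comp (RingHom.snd A1 C))

/-- The ℚ-algebra homomorphism `ℚ[K₁, K₂, G, Q] → A₁ × C` determined by
`K₁ ↦ (k₁, k₁)`, `K₂ ↦ (k₂, k₂)`, `G ↦ (γ₂, 0)`, `Q ↦ (γ₂·η, 0)`
(with `K₁ = X 0`, `K₂ = X 1`, `G = X 2`, `Q = X 3`). -/
noncomputable def Φ : MvPolynomial (Fin 4) ℚ →ₐ[ℚ] A1 × C :=
  aeval ![(mkA (X 0), X 0), (mkA (X 1), X 1), (mkA (X 2), 0), (mkA (X 2 * X 3), 0)]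

noncomputable section

/-- Equivalence sending `X 3 ↦ Y`, `X i ↦ C (X i)` for `i < 3`. -/
def E4 : MvPolynomial (Fin 4) ℚ ≃ₐ[ℚ] Polynomial (MvPolynomial (Fin 3) ℚ) :=
  (renameEquiv ℚ (finRotate 4)).trans (MvPolynomial.finSuccEquiv ℚ 3)

def E3 : MvPolynomial (Fin 3) ℚ ≃ₐ[ℚ] Polynomial (MvPolynomial (Fin 2) ℚ) :=
  (renameEquiv ℚ (finRotate 3)).trans (MvPolynomial.finSuccEquiv ℚ 2)

lemma E4_X3 : E4 (X 3) = Polynomial.X := by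
  simp [E4, finSuccEquiv_X_zero]
lemma E4_X0 : E4 (X 0) = Polynomial.C (X 0) := by
  simp only [E4, AlgEquiv.trans_apply, renameEquiv_apply, rename_X]
  rw [show finRotate 4 0 = Fin.succ 0 from rfl, finSuccEquiv_X_succ]
lemma E4_X1 : E4 (X 1) = Polynomial.C (X 1) := by
  simp only [E4, AlgEquiv.trans_apply, renameEquiv_apply, rename_X]
  rw [show finRotate 4 1 = Fin.succ 1 from rfl, finSuccEquiv_X_succ]
lemma E4_X2 : E4 (X 2) = Polynomial.C (X 2) := by
  simp only [E4, AlgEquiv.trans_apply, renameEquiv_apply, rename_X]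
  rw [show finRotate 4 2 = Fin.succ 2 from rfl, finSuccEquiv_X_succ]

lemma E3_X2 : E3 (X 2) = Polynomial.X := by
  simp [E3, finSuccEquiv_X_zero]
lemma E3_X0 : E3 (X 0) = Polynomial.C (X 0) := by
  simp only [E3, AlgEquiv.trans_apply, renameEquiv_apply, rename_X]
  rw [show finRotate 3 0 = Fin.succ 0 from rfl, finSuccEquiv_X_succ]
lemma E3_X1 : E3 (X 1) = Polynomial.C (X 1) := by
  simp only [E3, AlgEquiv.trans_apply, renameEquiv_apply, rename_X]
  rw [show finRotate 3 1 = Fin.succ 1 from rfl, finSuccEquiv_X_succ]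

/-- dvd transfers along an algebra equivalence. -/
lemma equiv_dvd {A B : Type*} [CommSemiring A] [CommSemiring B] [Algebra ℚ A] [Algebra ℚ B]
    (e : A ≃ₐ[ℚ] B) {x y : A} : x ∣ y ↔ e x ∣ e y := by
  constructor
  · exact fun h => map_dvd e h
  · rintro ⟨c, hc⟩
    exact ⟨e.symm c, e.injective (by rw [map_mul, hc, AlgEquiv.apply_symm_apply])⟩

/-- The key degree argument. -/
lemma key {R : Type*} [CommRing R] [IsDomain R] (w u v : R)
    (h : (Polynomial.X ^ 2 + Polynomial.C w) ∣ (Polynomial.C u + Polynomial.C v * Polynomial.X)) :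
    u = 0 ∧ v = 0 := by
  set ρ : Polynomial R := Polynomial.C u + Polynomial.C v * Polynomial.X with hρ
  have hρ0 : ρ = 0 := by
    by_contra hne
    have hd := Polynomial.degree_le_of_dvd h hne
    rw [Polynomial.degree_X_pow_add_C (by norm_num) w] at hd
    have hle : ρ.degree ≤ 1 := by
      refine le_trans (Polynomial.degree_add_le _ _) (max_le (le_trans Polynomial.degree_C_le ?_) ?_)
      · norm_num
      · refine le_trans (Polynomial.degree_mul_le _ _) ?_
        refine le_trans (add_le_add Polynomial.degree_C_le Polynomial.degree_X_le) ?_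
        norm_num
    have : (2 : WithBot ℕ) ≤ 1 := le_trans hd hle
    norm_num at this
  rw [hρ] at hρ0
  constructor
  · have := congrArg (fun q => Polynomial.coeff q 0) hρ0
    simpa using this
  · have := congrArg (fun q => Polynomial.coeff q 1) hρ0
    simpa using this

def ι3 : MvPolynomial (Fin 3) ℚ →ₐ[ℚ] MvPolynomial (Fin 4) ℚ := rename Fin.castSucc

def πh : MvPolynomial (Fin 4) ℚ →ₐ[ℚ] MvPolynomial (Fin 3) ℚ := aeval ![X 0, X 1, 0, X 2]

def ev0 : MvPolynomial (Fin 3) ℚ →ₐ[ℚ] MvPolynomial (Fin 2) ℚ := aeval ![X 0, X 1, 0]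

def inc2 : MvPolynomial (Fin 2) ℚ →ₐ[ℚ] MvPolynomial (Fin 3) ℚ := aeval ![X 0, X 1]

def aPart : MvPolynomial (Fin 4) ℚ →ₐ[ℚ] MvPolynomial (Fin 4) ℚ := aeval ![X 0, X 1, X 2, X 2 * X 3]

def cPart : MvPolynomial (Fin 4) ℚ →ₐ[ℚ] MvPolynomial (Fin 2) ℚ := aeval ![X 0, X 1, 0, 0]

/-- `C` as a `ℚ`-algebra hom. -/
def CA (n : ℕ) : MvPolynomial (Fin n) ℚ →ₐ[ℚ] Polynomial (MvPolynomial (Fin n) ℚ) :=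
  IsScalarTower.toAlgHom ℚ _ _

lemma CA_apply (n : ℕ) (x : MvPolynomial (Fin n) ℚ) : CA n x = Polynomial.C x := rfl

lemma E4_ι (u : MvPolynomial (Fin 3) ℚ) : E4 (ι3 u) = Polynomial.C u := by
  have h : (E4.toAlgHom.comp ι3) = CA 3 := by
    apply MvPolynomial.algHom_ext
    intro i
    fin_cases i <;>
      simp only [AlgHom.comp_apply, ι3, rename_X, AlgEquiv.toAlgHom_eq_coe,
        AlgHom.coe_coe, CA_apply] <;>
      [exact E4_X0; exact E4_X1; exact E4_X2]
  have := DFunLike.congr_fun h u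
  simpa [CA_apply] using this

lemma E3_inc2 (c : MvPolynomial (Fin 2) ℚ) : E3 (inc2 c) = Polynomial.C c := by
  have h : (E3.toAlgHom.comp inc2) = CA 2 := by
    apply MvPolynomial.algHom_ext
    intro i
    fin_cases i <;>
      simp only [AlgHom.comp_apply, inc2, aeval_X, AlgEquiv.toAlgHom_eq_coe,
        AlgHom.coe_coe, CA_apply, Matrix.cons_val_zero, Matrix.cons_val_one, Matrix.head_cons] <;>
      [exact E3_X0; exact E3_X1]
  have := DFunLike.congr_fun h c
  simpa [CA_apply] using this

lemma E3_πι (u : MvPolynomial (Fin 3) ℚ) : E3 (πh (ι3 u)) = Polynomial.C (ev0 u) := by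
  have h : (E3.toAlgHom.comp (πh.comp ι3)) = (CA 2).comp ev0 := by
    apply MvPolynomial.algHom_ext
    intro i
    fin_cases i <;>
      simp [πh, ι3, ev0, CA_apply, E3_X0, E3_X1, E3_X2,
        Fin.castSucc, Fin.castAdd, Fin.castLE]
  have := DFunLike.congr_fun h u
  simpa [CA_apply] using this

lemma cPart_ι (u : MvPolynomial (Fin 3) ℚ) : cPart (ι3 u) = ev0 u := by
  have h : cPart.comp ι3 = ev0 := by
    apply MvPolynomial.algHom_ext
    intro i
    fin_cases i <;> simp [cPart, ι3, ev0, Fin.castSucc, Fin.castAdd, Fin.castLE]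
  exact DFunLike.congr_fun h u

lemma aPart_ι (u : MvPolynomial (Fin 3) ℚ) : aPart (ι3 u) = ι3 u := by
  have h : aPart.comp ι3 = ι3 := by
    apply MvPolynomial.algHom_ext
    intro i
    fin_cases i <;> simp [aPart, ι3, Fin.castSucc, Fin.castAdd, Fin.castLE]
  exact DFunLike.congr_fun h u

lemma ev0_eq (v : MvPolynomial (Fin 3) ℚ) :
    ev0 v = (E3 v).eval 0 := by
  have h : ev0 = ((Polynomial.aeval (0 : MvPolynomial (Fin 2) ℚ)).restrictScalars ℚ).comp
      E3.toAlgHom := by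
    apply MvPolynomial.algHom_ext
    intro i
    fin_cases i <;> simp [ev0, E3_X0, E3_X1, E3_X2]
  rw [h]
  simp [Polynomial.aeval_def, Polynomial.eval]

/-- Decomposition modulo a polynomial `t` with `E4 t = Y² + C w`. -/
lemma decomp (t : MvPolynomial (Fin 4) ℚ) (w : MvPolynomial (Fin 3) ℚ)
    (ht : E4 t = Polynomial.X ^ 2 + Polynomial.C w) (z : MvPolynomial (Fin 4) ℚ) :
    ∃ u v h, z = t * h + (ι3 u + ι3 v * X 3) := by
  have hmon : (Polynomial.X ^ 2 + Polynomial.C w).Monic :=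
    Polynomial.monic_X_pow_add_C w (two_ne_zero)
  have hlt : (E4 z %ₘ (Polynomial.X ^ 2 + Polynomial.C w)).degree < 2 := by
    have := Polynomial.degree_modByMonic_lt (E4 z) hmon
    rwa [Polynomial.degree_X_pow_add_C (by norm_num) w] at this
  have hle : (E4 z %ₘ (Polynomial.X ^ 2 + Polynomial.C w)).degree ≤ 1 :=
    Order.le_of_lt_succ (by exact_mod_cast hlt)
  have hrC := Polynomial.eq_X_add_C_of_degree_le_one hle
  refine ⟨(E4 z %ₘ (Polynomial.X ^ 2 + Polynomial.C w)).coeff 0,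
    (E4 z %ₘ (Polynomial.X ^ 2 + Polynomial.C w)).coeff 1,
    E4.symm (E4 z /ₘ (Polynomial.X ^ 2 + Polynomial.C w)), ?_⟩
  apply E4.injective
  rw [map_add, map_mul, ht, AlgEquiv.apply_symm_apply, map_add, map_mul, E4_ι, E4_ι, E4_X3]
  have hz := Polynomial.modByMonic_add_div (E4 z) (Polynomial.X ^ 2 + Polynomial.C w)
  conv_lhs => rw [← hz]
  nth_rewrite 1 [hrC]
  ring

end

noncomputable section

def gA : MvPolynomial (Fin 3) ℚ := -((2 * X 1 + X 0 ^ 2) * (4 * X 2 - X 0 ^ 2))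

def eB : MvPolynomial (Fin 2) ℚ := (2 * X 1 + X 0 ^ 2) * X 0 ^ 2

def gR : MvPolynomial (Fin 3) ℚ := X 2 ^ 2 * (2 * X 1 + X 0 ^ 2) * (X 0 ^ 2 - 4 * X 2)

def r0 : MvPolynomial (Fin 4) ℚ :=
  X 3 ^ 2 + X 2 ^ 2 * (2 * X 1 + X 0 ^ 2) * (X 0 ^ 2 - 4 * X 2)

lemma E4_relA : E4 relA = Polynomial.X ^ 2 + Polynomial.C gA := by
  simp only [relA, gA, map_sub, map_add, map_mul, map_pow, map_ofNat, map_neg,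
    E4_X0, E4_X1, E4_X2, E4_X3]
  ring

lemma E3_relB : E3 relB = Polynomial.X ^ 2 + Polynomial.C eB := by
  simp only [relB, eB, map_sub, map_add, map_mul, map_pow, map_ofNat,
    E3_X0, E3_X1, E3_X2]
  try ring

lemma E4_r0 : E4 r0 = Polynomial.X ^ 2 + Polynomial.C gR := by
  simp only [r0, gR, map_sub, map_add, map_mul, map_pow, map_ofNat,
    E4_X0, E4_X1, E4_X2, E4_X3]
  try ring

lemma mkA_eq_zero (z : MvPolynomial (Fin 4) ℚ) : mkA z = 0 ↔ relA ∣ z := by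
  rw [mkA, Ideal.Quotient.mkₐ_eq_mk, Ideal.Quotient.eq_zero_iff_mem, Ideal.mem_span_singleton]

lemma mkB_eq_zero (z : MvPolynomial (Fin 3) ℚ) : mkB z = 0 ↔ relB ∣ z := by
  rw [mkB, Ideal.Quotient.mkₐ_eq_mk, Ideal.Quotient.eq_zero_iff_mem, Ideal.mem_span_singleton]

lemma p_mk (z : MvPolynomial (Fin 4) ℚ) : p (mkA z) = mkB (πh z) := rfl

lemma q_eq (c : MvPolynomial (Fin 2) ℚ) : q c = mkB (inc2 c) := rfl

lemma Phi_fst (P : MvPolynomial (Fin 4) ℚ) : (Φ P).1 = mkA (aPart P) := by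
  have h : (AlgHom.fst ℚ A1 C).comp Φ = mkA.comp aPart := by
    apply MvPolynomial.algHom_ext
    intro i
    fin_cases i <;> simp [Φ, aPart] <;> rfl
  exact DFunLike.congr_fun h P

lemma Phi_snd (P : MvPolynomial (Fin 4) ℚ) : (Φ P).2 = cPart P := by
  have h : (AlgHom.snd ℚ A1 C).comp Φ = cPart := by
    apply MvPolynomial.algHom_ext
    intro i
    fin_cases i <;> simp [Φ, cPart] <;> rfl
  exact DFunLike.congr_fun h P

lemma Phi_r0 : Φ r0 = 0 := by
  have h1 : (Φ r0).1 = 0 := by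
    rw [Phi_fst, mkA_eq_zero]
    refine ⟨X 2 ^ 2, ?_⟩
    simp only [r0, aPart, relA, map_add, map_mul, map_pow, map_sub, map_ofNat, aeval_X]
    simp only [Matrix.cons_val_zero, Matrix.cons_val_one, Matrix.cons_val_two,
      Matrix.cons_val_three, Matrix.head_cons, Matrix.tail_cons]
    ring
  have h2 : (Φ r0).2 = 0 := by
    rw [Phi_snd]
    simp only [r0, cPart, map_add, map_mul, map_pow, map_sub, map_ofNat, aeval_X]
    simp only [Matrix.cons_val_zero, Matrix.cons_val_one, Matrix.cons_val_two,
      Matrix.cons_val_three, Matrix.head_cons, Matrix.tail_cons]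
    ring
  exact Prod.ext h1 h2

lemma X2_dvd {v : MvPolynomial (Fin 3) ℚ} (hv : ev0 v = 0) : X 2 ∣ v := by
  rw [equiv_dvd E3, E3_X2]
  rw [Polynomial.X_dvd_iff, Polynomial.coeff_zero_eq_eval_zero, ← ev0_eq]
  exact hv

end

lemma iso_lemma (h1 : Φ.toRingHom.range = F)
    (h2 : RingHom.ker Φ = Ideal.span ({r0} : Set (MvPolynomial (Fin 4) ℚ))) :
    Nonempty (F ≃+* (MvPolynomial (Fin 4) ℚ ⧸
      Ideal.span ({r0} : Set (MvPolynomial (Fin 4) ℚ)))) := by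
  have hk2 : RingHom.ker Φ.toRingHom = Ideal.span ({r0} : Set (MvPolynomial (Fin 4) ℚ)) := h2
  have e0 : (MvPolynomial (Fin 4) ℚ ⧸ RingHom.ker Φ.toRingHom) ≃+* Φ.toRingHom.range :=
    RingHom.quotientKerEquivRange Φ.toRingHom
  exact ⟨((RingEquiv.subringCongr h1).symm.trans e0.symm).trans (Ideal.quotEquivOfEq hk2)⟩

/-- `Φ` lands in the fiber product `A₁ ×_B C`, is surjective onto it, and its kernel
is the principal ideal generated by `Q² + G²(2K₂ + K₁²)(K₁² − 4G)`; hence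
`A₁ ×_B C ≅ ℚ[K₁, K₂, G, Q]/(Q² + G²(2K₂ + K₁²)(K₁² − 4G))`. -/
theorem stmt7 :
    Φ.toRingHom.range = F ∧
    RingHom.ker Φ =
      Ideal.span ({X 3 ^ 2 + X 2 ^ 2 * (2 * X 1 + X 0 ^ 2) * (X 0 ^ 2 - 4 * X 2)} :
        Set (MvPolynomial (Fin 4) ℚ)) ∧
    Nonempty
      (F ≃+* (MvPolynomial (Fin 4) ℚ ⧸
        Ideal.span ({X 3 ^ 2 + X 2 ^ 2 * (2 * X 1 + X 0 ^ 2) * (X 0 ^ 2 - 4 * X 2)} :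
          Set (MvPolynomial (Fin 4) ℚ)))) := by
  have hr0 : (X 3 ^ 2 + X 2 ^ 2 * (2 * X 1 + X 0 ^ 2) * (X 0 ^ 2 - 4 * X 2) :
      MvPolynomial (Fin 4) ℚ) = r0 := rfl
  -- the kernel computation
  have hker : RingHom.ker Φ = Ideal.span ({r0} : Set (MvPolynomial (Fin 4) ℚ)) := by
    apply le_antisymm
    · intro P hP
      rw [RingHom.mem_ker] at hP
      obtain ⟨u, v, h, hEq⟩ := decomp r0 gR E4_r0 P
      have h1 : Φ (ι3 u + ι3 v * X 3) = 0 := by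
        have h0 := congrArg Φ hEq
        rw [hP, map_add, map_mul, Phi_r0, zero_mul, zero_add] at h0
        exact h0.symm
      have ha : aPart (ι3 u + ι3 v * X 3) = ι3 u + ι3 v * (X 2 * X 3) := by
        have hX3 : aPart (X 3) = X 2 * X 3 := by simp [aPart]
        rw [map_add, map_mul, aPart_ι, aPart_ι, hX3]
      have h2 : mkA (ι3 u + ι3 v * (X 2 * X 3)) = 0 := by
        have := congrArg Prod.fst h1
        rwa [Phi_fst, ha] at this
      have h3 := (mkA_eq_zero _).mp h2
      rw [equiv_dvd E4, E4_relA] at h3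
      have hE : E4 (ι3 u + ι3 v * (X 2 * X 3)) =
          Polynomial.C u + Polynomial.C (v * X 2) * Polynomial.X := by
        rw [map_add, map_mul, map_mul, E4_ι, E4_ι, E4_X2, E4_X3, map_mul]
        ring
      rw [hE] at h3
      obtain ⟨hu, hv2⟩ := key _ _ _ h3
      have hv : v = 0 := by
        rcases mul_eq_zero.mp hv2 with h' | h'
        · exact h'
        · exact absurd h' (MvPolynomial.X_ne_zero _)
      rw [Ideal.mem_span_singleton]
      exact ⟨h, by rw [hEq, hu, hv]; simp⟩
    · rw [Ideal.span_le, Set.singleton_subset_iff]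
      exact Phi_r0
  -- the range computation
  have hrange : Φ.toRingHom.range = F := by
    apply le_antisymm
    · rintro y ⟨P, rfl⟩
      have hcomp : p.comp (mkA.comp aPart) = q.comp cPart := by
        apply MvPolynomial.algHom_ext
        intro i
        fin_cases i <;>
          simp [aPart, cPart, p_mk, q_eq, πh, inc2]
      show p ((Φ P).1) = q ((Φ P).2)
      rw [Phi_fst, Phi_snd]
      exact DFunLike.congr_fun hcomp P
    · intro y hy
      have hy' : p y.1 = q y.2 := hy
      obtain ⟨z, hz⟩ := Ideal.Quotient.mkₐ_surjective ℚ (Ideal.span {relA}) y.1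
      obtain ⟨u, v, h, hEq⟩ := decomp relA gA E4_relA z
      have hmkrel : mkA relA = 0 := (mkA_eq_zero relA).mpr dvd_rfl
      have ha : y.1 = mkA (ι3 u + ι3 v * X 3) := by
        rw [← hz]
        show mkA z = _
        rw [hEq, map_add, map_mul, hmkrel, zero_mul, zero_add]
      have hπ : πh (ι3 u + ι3 v * X 3) = πh (ι3 u) + πh (ι3 v) * X 2 := by
        have hX3 : πh (X 3) = X 2 := by simp [πh]
        rw [map_add, map_mul, hX3]
      have hcond : mkB (πh (ι3 u) + πh (ι3 v) * X 2 - inc2 y.2) = 0 := by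
        have hh := hy'
        rw [ha, p_mk, q_eq, hπ] at hh
        rw [map_sub, hh, sub_self]
      have hdvd := (mkB_eq_zero _).mp hcond
      rw [equiv_dvd E3, E3_relB] at hdvd
      have hE : E3 (πh (ι3 u) + πh (ι3 v) * X 2 - inc2 y.2) =
          Polynomial.C (ev0 u - y.2) + Polynomial.C (ev0 v) * Polynomial.X := by
        rw [map_sub, map_add, map_mul, E3_πι, E3_πι, E3_X2, E3_inc2, map_sub]
        ring
      rw [hE] at hdvd
      obtain ⟨hu, hv⟩ := key _ _ _ hdvd
      obtain ⟨w, hw⟩ := X2_dvd hv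
      refine ⟨ι3 u + ι3 w * X 3, ?_⟩
      have hX2 : ι3 (X 2 : MvPolynomial (Fin 3) ℚ) = X 2 := by
        rw [ι3]
        simp only [rename_X]
        rfl
      apply Prod.ext
      · show (Φ _).1 = y.1
        rw [Phi_fst, ha]
        congr 1
        have hX3 : aPart (X 3) = X 2 * X 3 := by simp [aPart]
        rw [map_add, map_mul, aPart_ι, aPart_ι, hX3, hw, map_mul, hX2]
        ring
      · show (Φ _).2 = y.2
        rw [Phi_snd]
        have hX3 : cPart (X 3) = 0 := by simp [cPart]
        rw [map_add, map_mul, cPart_ι, cPart_ι, hX3, mul_zero, add_zero]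
        exact sub_eq_zero.mp hu
  rw [hr0]
  exact ⟨hrange, hker, iso_lemma hrange hker⟩

end Stmt7
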